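/- Suppose A ∈ ℝ^{n×d} has full column rank with Lewis weights w_1, …, w_n. Then for every vector u in the column space of A, every index i ∈ [n], and every p ≥ 1, |u_i| ≤ d^{1/2 - 1/max(2,p)} · w_i^{1/p} · ‖u‖_p. -/

import Mathlib

open Matrix

/-- Cauchy–Schwarz w.r.t. a positive definite matrix. -/
lemma lw_cs_posdef {d : ℕ} {M : Matrix (Fin d) (Fin d) ℝ} (hM : M.PosDef)
    (v x : Fin d → ℝ) :
    (v ⬝ᵥ x) ^ 2 ≤ (v ⬝ᵥ M⁻¹ *ᵥ v) * (x ⬝ᵥ M *ᵥ x) := by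
  have hdet : IsUnit M.det := isUnit_iff_ne_zero.mpr (ne_of_gt hM.det_pos)
  have hMiv : M *ᵥ (M⁻¹ *ᵥ v) = v := by
    rw [mulVec_mulVec, M.mul_nonsing_inv hdet, one_mulVec]
  have hsymm : Mᵀ = M := by
    have := hM.isHermitian; rwa [IsHermitian, conjTranspose_eq_transpose_of_trivial] at this
  have hsym : ∀ y z : Fin d → ℝ, y ⬝ᵥ M *ᵥ z = z ⬝ᵥ M *ᵥ y := by
    intro y z
    rw [dotProduct_mulVec, dotProduct_comm, ← mulVec_transpose, hsymm, dotProduct_mulVec]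
  set y := M⁻¹ *ᵥ v with hy
  have key : ∀ t : ℝ, 0 ≤ (x ⬝ᵥ M *ᵥ x) * (t * t) + (-2 * (v ⬝ᵥ x)) * t + (v ⬝ᵥ M⁻¹ *ᵥ v) := by
    intro t
    have h0 := hM.posSemidef.dotProduct_mulVec_nonneg (t • x - y)
    have hexp : star (t • x - y) ⬝ᵥ M *ᵥ (t • x - y)
        = (x ⬝ᵥ M *ᵥ x) * (t * t) + (-2 * (v ⬝ᵥ x)) * t + (v ⬝ᵥ M⁻¹ *ᵥ v) := by
      have h1 : x ⬝ᵥ M *ᵥ y = x ⬝ᵥ v := by rw [hy, hMiv]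
      have h2 : y ⬝ᵥ M *ᵥ x = x ⬝ᵥ v := by rw [hsym y x, h1]
      have h3 : y ⬝ᵥ M *ᵥ y = v ⬝ᵥ M⁻¹ *ᵥ v := by
        rw [hy, hMiv]; exact dotProduct_comm _ _
      simp only [star_trivial, mulVec_sub, mulVec_smul, dotProduct_sub, sub_dotProduct,
        smul_dotProduct, dotProduct_smul, smul_eq_mul]
      rw [h1, h2, h3, dotProduct_comm v x]
      ring
    rw [← hexp]; exact h0
  have hd := discrim_le_zero key
  rw [discrim] at hd
  nlinarith [hd]

lemma lw_mulVec_inj_of_rank {n d : ℕ} (A : Matrix (Fin n) (Fin d) ℝ) (hrank : A.rank = d) :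
    ∀ x : Fin d → ℝ, x ≠ 0 → A *ᵥ x ≠ 0 := by
  have hker : LinearMap.ker A.mulVecLin = ⊥ := by
    have h1 := LinearMap.finrank_range_add_finrank_ker A.mulVecLin
    rw [Matrix.rank] at hrank
    rw [hrank] at h1
    simp only [Module.finrank_pi, Fintype.card_fin] at h1
    have : Module.finrank ℝ (LinearMap.ker A.mulVecLin) = 0 := by omega
    exact Submodule.finrank_eq_zero.mp this
  intro x hx hAx
  apply hx
  have hinj := LinearMap.ker_eq_bot.mp hker
  have : A.mulVecLin x = A.mulVecLin 0 := by simp [mulVecLin_apply, hAx]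
  exact hinj this

lemma lw_posdef_conj {n d : ℕ} (A : Matrix (Fin n) (Fin d) ℝ) (hrank : A.rank = d)
    (dg : Fin n → ℝ) (hdg : ∀ j, 0 < dg j) : (Aᵀ * diagonal dg * A).PosDef := by
  rw [posDef_iff_dotProduct_mulVec]
  constructor
  · show (Aᵀ * diagonal dg * A)ᴴ = _
    rw [conjTranspose_eq_transpose_of_trivial]
    rw [transpose_mul, transpose_mul, transpose_transpose, diagonal_transpose, Matrix.mul_assoc]
  · intro x hx
    have hy : A *ᵥ x ≠ 0 := lw_mulVec_inj_of_rank A hrank x hx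
    set y := A *ᵥ x with hy'
    have hcalc : star x ⬝ᵥ (Aᵀ * diagonal dg * A) *ᵥ x = ∑ j, dg j * (y j)^2 := by
      simp only [star_trivial, ← mulVec_mulVec]
      rw [dotProduct_mulVec x Aᵀ, vecMul_transpose]
      simp only [dotProduct, mulVec_diagonal, ← hy']
      congr 1; ext j; ring
    rw [hcalc]
    obtain ⟨j, hj⟩ := Function.ne_iff.mp hy
    have hpos : 0 < dg j * (y j)^2 :=
      mul_pos (hdg j) (by exact pow_pos (abs_pos.mpr hj) 2 |>.trans_eq (by rw [sq_abs]))
    exact Finset.sum_pos' (fun k _ => mul_nonneg (hdg k).le (sq_nonneg _))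
      ⟨j, Finset.mem_univ j, hpos⟩

lemma lw_trace_identity {n d : ℕ} (A : Matrix (Fin n) (Fin d) ℝ) (dg : Fin n → ℝ)
    (hM : IsUnit (Aᵀ * diagonal dg * A).det) :
    ∑ j, dg j * (A j ⬝ᵥ (Aᵀ * diagonal dg * A)⁻¹ *ᵥ A j) = d := by
  set M := Aᵀ * diagonal dg * A with hMdef
  have h1 : ∑ j, dg j * (A j ⬝ᵥ M⁻¹ *ᵥ A j)
      = Matrix.trace (diagonal dg * (A * (M⁻¹ * Aᵀ))) := by
    rw [Matrix.trace]
    congr 1; ext j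
    rw [diag_apply, diagonal_mul]
    simp [Matrix.mul_apply, transpose_apply, dotProduct, mulVec, Finset.mul_sum]
  have h2 : diagonal dg * (A * (M⁻¹ * Aᵀ)) = (diagonal dg * A * M⁻¹) * Aᵀ := by
    simp [Matrix.mul_assoc]
  rw [h1, h2, Matrix.trace_mul_comm]
  have h3 : Aᵀ * (diagonal dg * A * M⁻¹) = M * M⁻¹ := by
    rw [hMdef]; simp [Matrix.mul_assoc]
  rw [h3, M.mul_nonsing_inv hM, Matrix.trace_one]
  simp

/-- Property (d) of Lewis weights: if `A` has full column rank with `ℓ_p`-Lewis weights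
`w_1,…,w_n`, then for every `u` in the column space of `A` and every index `i`,
`|u_i| ≤ d^{1/2 - 1/max(2,p)} · w_i^{1/p} · ‖u‖_p`. -/
theorem lewis_weight_coordinate_bound (n d : ℕ) (p : ℝ) (hp : 1 ≤ p)
    (A : Matrix (Fin n) (Fin d) ℝ) (hrank : A.rank = d)
    (w : Fin n → ℝ) (hw : ∀ i, 0 < w i)
    (hfix : ∀ i, w i =
      (A i ⬝ᵥ ((Aᵀ * Matrix.diagonal (fun k => w k ^ (1 - 2 / p)) * A)⁻¹ *ᵥ A i)) ^ (p / 2))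
    (u : Fin n → ℝ) (hu : ∃ x : Fin d → ℝ, u = A *ᵥ x) (i : Fin n) :
    |u i| ≤ (d : ℝ) ^ ((1 : ℝ) / 2 - 1 / max 2 p) * w i ^ (1 / p) *
      (∑ j, |u j| ^ p) ^ (1 / p) := by
  obtain ⟨x, rfl⟩ := hu
  have hp0 : (0:ℝ) < p := lt_of_lt_of_le one_pos hp
  set q : ℝ := 1 - 2 / p with hq
  set dg : Fin n → ℝ := fun k => w k ^ q with hdgdef
  set M := Aᵀ * diagonal dg * A with hMdef
  set u := A *ᵥ x with hudef
  have hdgpos : ∀ k, 0 < dg k := fun k => Real.rpow_pos_of_pos (hw k) q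
  have hMpd : M.PosDef := lw_posdef_conj A hrank dg hdgpos
  have hdet : IsUnit M.det := isUnit_iff_ne_zero.mpr hMpd.det_pos.ne'
  set c : Fin n → ℝ := fun j => A j ⬝ᵥ M⁻¹ *ᵥ A j with hcdef
  have hcnn : ∀ j, 0 ≤ c j := by
    intro j
    simpa using hMpd.inv.posSemidef.dotProduct_mulVec_nonneg (A j)
  have hwc : ∀ j, w j ^ ((2:ℝ) / p) = c j := by
    intro j
    rw [hfix j]
    show (c j ^ (p/2)) ^ ((2:ℝ)/p) = c j
    rw [← Real.rpow_mul (hcnn j)]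
    rw [show p/2*(2/p) = 1 by field_simp, Real.rpow_one]
  -- sum of weights equals d
  have hsumw : ∑ j, w j = (d:ℝ) := by
    have htr := lw_trace_identity A dg hdet
    rw [← htr]
    apply Finset.sum_congr rfl
    intro j _
    show w j = dg j * c j
    rw [← hwc j]
    show w j = w j ^ q * w j ^ ((2:ℝ)/p)
    rw [← Real.rpow_add (hw j), show q + 2/p = 1 by rw [hq]; ring, Real.rpow_one]
  -- the quadratic form value
  set t : ℝ := x ⬝ᵥ M *ᵥ x with htdef
  have htnn : 0 ≤ t := by simpa using hMpd.posSemidef.dotProduct_mulVec_nonneg x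
  have htsum : t = ∑ j, dg j * (u j)^2 := by
    rw [htdef, hMdef]
    simp only [← mulVec_mulVec]
    rw [dotProduct_mulVec x Aᵀ, vecMul_transpose]
    simp only [dotProduct, mulVec_diagonal, ← hudef]
    congr 1; ext j; ring
  -- Cauchy-Schwarz
  have hCS : ∀ j, (u j)^2 ≤ w j ^ ((2:ℝ)/p) * t := by
    intro j
    have h := lw_cs_posdef hMpd (A j) x
    rw [hwc j]
    exact h
  set Sp : ℝ := ∑ j, |u j| ^ p with hSpdef
  have hSpnn : 0 ≤ Sp :=
    Finset.sum_nonneg fun j _ => Real.rpow_nonneg (abs_nonneg _) p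
  have hRHSnn : 0 ≤ (d : ℝ) ^ ((1 : ℝ) / 2 - 1 / max 2 p) * w i ^ (1 / p) * Sp ^ (1 / p) := by
    apply mul_nonneg (mul_nonneg (Real.rpow_nonneg (Nat.cast_nonneg d) _)
      (Real.rpow_nonneg (hw i).le _)) (Real.rpow_nonneg hSpnn _)
  rcases eq_or_lt_of_le htnn with ht0 | htpos
  · -- t = 0 forces u i = 0
    have : (u i)^2 ≤ 0 := by
      have := hCS i
      rw [← ht0, mul_zero] at this
      exact this
    have hui : u i = 0 := by nlinarith [sq_nonneg (u i)]
    rw [hui, abs_zero]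
    exact hRHSnn
  -- main bound on t
  have hT : t ≤ (d : ℝ) ^ (1 - 2 / max 2 p) * Sp ^ ((2:ℝ)/p) := by
    rcases le_or_gt p 2 with hple | hpgt
    · -- p ≤ 2 : bootstrap
      have hmax : max 2 p = 2 := max_eq_left hple
      rw [hmax, show (1:ℝ) - 2/2 = 0 by norm_num, Real.rpow_zero, one_mul]
      have hterm : ∀ j, dg j * (u j)^2 ≤ t ^ ((2-p)/2) * |u j| ^ p := by
        intro j
        rcases eq_or_ne (u j) 0 with hz | hz
        · rw [hz]
          simp only [ne_eq, abs_zero, zero_pow]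
          rw [Real.zero_rpow hp0.ne', mul_zero]
          simp
        · have ha : 0 < |u j| := abs_pos.mpr hz
          have h2 : (u j)^2 = |u j| ^ p * |u j| ^ ((2:ℝ)-p) := by
            rw [← Real.rpow_add ha, show p + (2-p) = (2:ℝ) by ring]
            rw [show ((2:ℝ):ℝ) = ((2:ℕ):ℝ) by norm_num, Real.rpow_natCast, sq_abs]
          have h3 : |u j| ^ ((2:ℝ)-p) ≤ (w j ^ ((2:ℝ)/p) * t) ^ (((2:ℝ)-p)/2) := by
            have hsq : |u j| ≤ (w j ^ ((2:ℝ)/p) * t) ^ ((1:ℝ)/2) := by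
              have hb : (0:ℝ) ≤ w j ^ ((2:ℝ)/p) * t :=
                mul_nonneg (Real.rpow_nonneg (hw j).le _) htnn
              have := hCS j
              calc |u j| = ((u j)^2) ^ ((1:ℝ)/2) := by
                    rw [← sq_abs, ← Real.rpow_natCast |u j| 2,
                      ← Real.rpow_mul (abs_nonneg _),
                      show ((2:ℕ):ℝ)*((1:ℝ)/2) = 1 by norm_num, Real.rpow_one]
                _ ≤ (w j ^ ((2:ℝ)/p) * t) ^ ((1:ℝ)/2) :=
                    Real.rpow_le_rpow (sq_nonneg _) this (by norm_num)
            calc |u j| ^ ((2:ℝ)-p) ≤ ((w j ^ ((2:ℝ)/p) * t) ^ ((1:ℝ)/2)) ^ ((2:ℝ)-p) :=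
                  Real.rpow_le_rpow ha.le hsq (by linarith)
              _ = (w j ^ ((2:ℝ)/p) * t) ^ (((2:ℝ)-p)/2) := by
                  rw [← Real.rpow_mul (mul_nonneg (Real.rpow_nonneg (hw j).le _) htnn)]
                  ring_nf
          have hmulr : (w j ^ ((2:ℝ)/p) * t) ^ (((2:ℝ)-p)/2)
              = (w j ^ ((2:ℝ)/p)) ^ (((2:ℝ)-p)/2) * t ^ (((2:ℝ)-p)/2) :=
            Real.mul_rpow (Real.rpow_nonneg (hw j).le _) htnn
          have hwexp : w j ^ q * (w j ^ ((2:ℝ)/p)) ^ (((2:ℝ)-p)/2) = 1 := by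
            rw [← Real.rpow_mul (hw j).le, ← Real.rpow_add (hw j),
              show q + (2/p)*((2-p)/2) = 0 by rw [hq]; field_simp; ring,
              Real.rpow_zero]
          calc dg j * (u j)^2 = w j ^ q * (|u j| ^ p * |u j| ^ ((2:ℝ)-p)) := by
                rw [h2]
            _ ≤ w j ^ q * (|u j| ^ p * ((w j ^ ((2:ℝ)/p) * t) ^ (((2:ℝ)-p)/2))) := by
                apply mul_le_mul_of_nonneg_left _ (Real.rpow_nonneg (hw j).le _)
                exact mul_le_mul_of_nonneg_left h3 (Real.rpow_nonneg (abs_nonneg _) _)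
            _ = (w j ^ q * (w j ^ ((2:ℝ)/p)) ^ (((2:ℝ)-p)/2)) * t ^ (((2:ℝ)-p)/2) * |u j| ^ p := by
                rw [hmulr]; ring
            _ = t ^ (((2:ℝ)-p)/2) * |u j| ^ p := by rw [hwexp, one_mul]
      have h4 : t ≤ t ^ (((2:ℝ)-p)/2) * Sp := by
        calc t = ∑ j, dg j * (u j)^2 := htsum
          _ ≤ ∑ j, t ^ (((2:ℝ)-p)/2) * |u j| ^ p := Finset.sum_le_sum fun j _ => hterm j
          _ = t ^ (((2:ℝ)-p)/2) * Sp := by rw [hSpdef, Finset.mul_sum]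
      have h5 : t ^ (p/2) ≤ Sp := by
        have hpos2 : 0 < t ^ (((2:ℝ)-p)/2) := Real.rpow_pos_of_pos htpos _
        have h6 : t ^ (((2:ℝ)-p)/2) * t ^ (p/2) ≤ t ^ (((2:ℝ)-p)/2) * Sp := by
          rw [← Real.rpow_add htpos, show ((2:ℝ)-p)/2 + p/2 = 1 by ring, Real.rpow_one]
          exact h4
        exact le_of_mul_le_mul_left h6 hpos2
      calc t = (t ^ (p/2)) ^ ((2:ℝ)/p) := by
            rw [← Real.rpow_mul htnn, show p/2*(2/p) = 1 by field_simp, Real.rpow_one]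
        _ ≤ Sp ^ ((2:ℝ)/p) :=
            Real.rpow_le_rpow (Real.rpow_nonneg htnn _) h5 (by positivity)
    · -- p > 2 : Hölder
      have hmax : max 2 p = p := max_eq_right hpgt.le
      rw [hmax]
      have hp2 : (0:ℝ) < p - 2 := by linarith
      have hpe : (p/(p-2)).HolderConjugate (p/2) := by
        rw [Real.holderConjugate_iff]
        constructor
        · rw [one_lt_div hp2]; linarith
        · rw [show (p/(p-2))⁻¹ = (p-2)/p by rw [inv_div],
            show (p/2)⁻¹ = 2/p by rw [inv_div]]
          field_simp
          ring
      have hH := Real.inner_le_Lp_mul_Lq_of_nonneg (s := Finset.univ) hpe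
        (f := dg) (g := fun j => (u j)^2)
        (fun j _ => (hdgpos j).le) (fun j _ => sq_nonneg _)
      have e1 : ∀ j : Fin n, dg j ^ (p/(p-2)) = w j := by
        intro j
        show (w j ^ q) ^ (p/(p-2)) = w j
        rw [← Real.rpow_mul (hw j).le,
          show q * (p/(p-2)) = 1 by rw [hq]; field_simp, Real.rpow_one]
      have e2 : ∀ j : Fin n, ((u j)^2) ^ (p/2) = |u j| ^ p := by
        intro j
        rw [← sq_abs, ← Real.rpow_natCast |u j| 2, ← Real.rpow_mul (abs_nonneg _),
          show ((2:ℕ):ℝ)*(p/2) = p by push_cast; ring]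
      simp only [e1, e2] at hH
      rw [hsumw] at hH
      calc t = ∑ j, dg j * (u j)^2 := htsum
        _ ≤ ((d:ℝ)) ^ (1/(p/(p-2))) * (∑ j, |u j| ^ p) ^ (1/(p/2)) := hH
        _ = (d:ℝ) ^ (1 - 2/p) * Sp ^ ((2:ℝ)/p) := by
            rw [show 1/(p/(p-2)) = 1 - 2/p by rw [one_div_div]; field_simp,
              show 1/(p/2) = 2/p by rw [one_div_div], hSpdef]
  -- final assembly
  have h6 : (u i)^2 ≤ w i ^ ((2:ℝ)/p) * ((d:ℝ) ^ (1 - 2/max 2 p) * Sp ^ ((2:ℝ)/p)) :=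
    le_trans (hCS i) (mul_le_mul_of_nonneg_left hT (Real.rpow_nonneg (hw i).le _))
  have hdnn : (0:ℝ) ≤ (d:ℝ) ^ ((1:ℝ) - 2/max 2 p) := Real.rpow_nonneg (Nat.cast_nonneg d) _
  rw [show |u i| = Real.sqrt ((u i)^2) from (Real.sqrt_sq_eq_abs _).symm]
  calc Real.sqrt ((u i)^2)
      ≤ Real.sqrt (w i ^ ((2:ℝ)/p) * ((d:ℝ) ^ (1 - 2/max 2 p) * Sp ^ ((2:ℝ)/p))) :=
        Real.sqrt_le_sqrt h6
    _ = (w i ^ ((2:ℝ)/p)) ^ ((1:ℝ)/2) *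
        (((d:ℝ) ^ ((1:ℝ) - 2/max 2 p)) ^ ((1:ℝ)/2) * (Sp ^ ((2:ℝ)/p)) ^ ((1:ℝ)/2)) := by
        rw [Real.sqrt_eq_rpow,
          Real.mul_rpow (Real.rpow_nonneg (hw i).le _)
            (mul_nonneg hdnn (Real.rpow_nonneg hSpnn _)),
          Real.mul_rpow hdnn (Real.rpow_nonneg hSpnn _)]
    _ = (d : ℝ) ^ ((1 : ℝ) / 2 - 1 / max 2 p) * w i ^ (1 / p) * Sp ^ (1 / p) := by
        rw [← Real.rpow_mul (hw i).le, ← Real.rpow_mul (Nat.cast_nonneg d),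
          ← Real.rpow_mul hSpnn,
          show (2/p)*((1:ℝ)/2) = 1/p by ring,
          show ((1:ℝ) - 2/max 2 p)*((1:ℝ)/2) = 1/2 - 1/max 2 p by ring]
        ring
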